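/- Let n ≥ 3 and let 2 ≤ r ≤ n−1. Then Σ_{σ ∈ S_n} fix(σ)^r · ( C(fix(σ)−1, 2) − c₂(σ) ) = n! · Σ_{i=2}^{r} C(i,2) · S(r,i), where C(a,b) denotes the binomial coefficient. Representation-theoretically, this says the multiplicity of the irreducible representation S^{(n−2,1,1)} of S_n in the r-th tensor power of the n-dimensional permutation representation equals Σ_{i=2}^{r} C(i,2) S(r,i). -/

import Mathlib

/-- Stirling numbers of the second kind. -/
def stirling : ℕ → ℕ → ℕ
  | 0, 0 => 1
  | 0, _ + 1 => 0
  | _ + 1, 0 => 0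
  | n + 1, k + 1 => (k + 1) * stirling n (k + 1) + stirling n k

/-- The number of fixed points of a permutation of `Fin n`. -/
def fixCount {n : ℕ} (σ : Equiv.Perm (Fin n)) : ℕ :=
  (Finset.univ.filter fun x => σ x = x).card

/-- The number of 2-cycles (transpositions) in the cycle decomposition of a permutation. -/
def twoCycleCount {n : ℕ} (σ : Equiv.Perm (Fin n)) : ℕ :=
  Multiset.count 2 σ.cycleType

open Finset Equiv

section machinery

lemma stirling_zero_of_lt : ∀ {t k : ℕ}, t < k → stirling t k = 0
  | 0, k+1, _ => rfl
  | t+1, k+1, h => by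
    have h1 : t < k + 1 := by omega
    have h2 : t < k := by omega
    simp [stirling, stirling_zero_of_lt h1, stirling_zero_of_lt h2]

lemma stirling_self : ∀ t, stirling t t = 1
  | 0 => rfl
  | t+1 => by
    have := stirling_zero_of_lt (show t < t+1 by omega)
    simp [stirling, this, stirling_self t]

def bsum (t : ℕ) : ℕ := ∑ k ∈ range (t+1), stirling t k
def psum (t : ℕ) : ℕ := ∑ k ∈ range (t+1), k * stirling t k
def qsum (t : ℕ) : ℕ := ∑ k ∈ range (t+1), k * k * stirling t k

lemma shift_sum (t : ℕ) (f : ℕ → ℕ) (h0 : f 0 = 0) :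
    ∑ k ∈ range (t+1), (f (k+1)) * stirling t (k+1)
      = ∑ k ∈ range (t+1), f k * stirling t k := by
  rw [Finset.sum_range_succ, stirling_zero_of_lt (by omega : t < t+1),
    Finset.sum_range_succ' (fun k => f k * stirling t k) t, h0]
  simp

lemma bsum_succ (t : ℕ) : bsum (t+1) = psum t + bsum t := by
  unfold bsum psum
  rw [Finset.sum_range_succ' (fun k => stirling (t+1) k) (t+1)]
  have h0 : stirling (t+1) 0 = 0 := rfl
  simp only [stirling, h0, add_zero]
  rw [Finset.sum_add_distrib, shift_sum t (fun k => k) rfl]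

lemma psum_succ (t : ℕ) : psum (t+1) = qsum t + psum t + bsum t := by
  unfold psum qsum bsum
  rw [Finset.sum_range_succ' (fun k => k * stirling (t+1) k) (t+1)]
  have expand : ∀ k, (k+1) * stirling (t+1) (k+1)
      = (k+1)*(k+1) * stirling t (k+1) + (k+1) * stirling t k := by
    intro k; simp only [stirling]; ring
  simp only [expand]
  rw [Finset.sum_add_distrib, shift_sum t (fun k => k * k) rfl]
  simp only [add_mul, one_mul, Finset.sum_add_distrib]
  omega

lemma qsum_eq (t : ℕ) : qsum t = (∑ k ∈ range (t+1), k * (k-1) * stirling t k) + psum t := by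
  unfold qsum psum
  rw [← Finset.sum_add_distrib]
  refine Finset.sum_congr rfl fun k _ => by cases k <;> simp <;> ring_nf <;> omega

lemma STId (r : ℕ) : bsum (r+2) + bsum r
    = 3 * bsum (r+1) + ∑ k ∈ range (r+1), k * (k-1) * stirling r k := by
  have h1 := bsum_succ (r+1)
  have h2 := bsum_succ r
  have h3 := psum_succ r
  have h4 := qsum_eq r
  zify at *
  linarith

lemma mul_descFactorial (x k : ℕ) :
    x * x.descFactorial k = x.descFactorial (k+1) + k * x.descFactorial k := by
  rcases le_or_gt k x with h | h
  · rw [Nat.descFactorial_succ]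
    have : x - k + k = x := by omega
    nlinarith [Nat.descFactorial_succ x k]
  · rw [Nat.descFactorial_of_lt h, Nat.descFactorial_of_lt (by omega)]
    simp

lemma pow_eq_sum_stirling (t x : ℕ) :
    (x : ℤ) ^ t = ∑ k ∈ range (t+1), (stirling t k : ℤ) * (x.descFactorial k : ℤ) := by
  induction t with
  | zero => simp [stirling]
  | succ t ih =>
    have step : (x:ℤ) ^ (t+1)
        = (∑ k ∈ range (t+1), (stirling t k : ℤ) * (x.descFactorial (k+1) : ℤ))
          + ∑ k ∈ range (t+1), (k : ℤ) * (stirling t k : ℤ) * (x.descFactorial k : ℤ) := by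
      rw [pow_succ, ih, Finset.sum_mul, ← Finset.sum_add_distrib]
      refine Finset.sum_congr rfl fun k _ => ?_
      have h := mul_descFactorial x k
      have h2 : (x:ℤ) * (x.descFactorial k : ℤ)
          = (x.descFactorial (k+1) : ℤ) + (k:ℤ) * (x.descFactorial k : ℤ) := by
        zify at h; linarith
      calc (stirling t k : ℤ) * (x.descFactorial k : ℤ) * (x:ℤ)
          = (stirling t k : ℤ) * ((x:ℤ) * (x.descFactorial k : ℤ)) := by ring
        _ = _ := by rw [h2]; ring
    have shift : (∑ k ∈ range (t+1), ((k:ℤ)+1) * (stirling t (k+1) : ℤ) * (x.descFactorial (k+1) : ℤ))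
        = ∑ k ∈ range (t+1), (k : ℤ) * (stirling t k : ℤ) * (x.descFactorial k : ℤ) := by
      rw [Finset.sum_range_succ, stirling_zero_of_lt (by omega : t < t+1),
        Finset.sum_range_succ' (fun k => (k : ℤ) * (stirling t k : ℤ) * (x.descFactorial k : ℤ)) t]
      push_cast
      simp only [mul_zero, zero_mul, add_zero]
      try exact Finset.sum_congr rfl fun k _ => by push_cast; ring
    have expand : ∑ k ∈ range (t+2), (stirling (t+1) k : ℤ) * (x.descFactorial k : ℤ)
        = (∑ k ∈ range (t+1), ((k:ℤ)+1) * (stirling t (k+1) : ℤ) * (x.descFactorial (k+1) : ℤ))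
          + ∑ k ∈ range (t+1), (stirling t k : ℤ) * (x.descFactorial (k+1) : ℤ) := by
      rw [Finset.sum_range_succ'
        (fun k => (stirling (t+1) k : ℤ) * (x.descFactorial k : ℤ)) (t+1)]
      have h0 : (stirling (t+1) 0 : ℤ) = 0 := by simp [stirling]
      rw [h0, zero_mul, add_zero, ← Finset.sum_add_distrib]
      refine Finset.sum_congr rfl fun k _ => ?_
      have : (stirling (t+1) (k+1) : ℤ)
          = ((k:ℤ)+1) * (stirling t (k+1) : ℤ) + (stirling t k : ℤ) := by
        push_cast [stirling]; ring
      rw [this]; ring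
    rw [step, expand, shift]; ring


lemma card_fixing (α : Type*) [Fintype α] [DecidableEq α] (K : Finset α) :
    (Finset.univ.filter fun σ : Perm α => ∀ x ∈ K, σ x = x).card
      = Nat.factorial (Fintype.card α - K.card) := by
  have : (Finset.univ.filter fun σ : Perm α => ∀ x ∈ K, σ x = x).card
      = Fintype.card { f : Perm α // ∀ a, ¬ a ∉ K → f a = a } := by
    rw [Fintype.card_subtype]; congr 1; ext σ; simp
  rw [this, ← Fintype.card_congr (Equiv.Perm.subtypeEquivSubtypePerm (fun a => a ∉ K)),
    Fintype.card_perm, Fintype.card_subtype]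
  congr 1
  rw [Finset.filter_not]
  simp [Finset.card_sdiff_of_subset (Finset.subset_univ K), Finset.card_univ, Finset.filter_mem_eq_inter]

lemma sum_choose_fix (α : Type*) [Fintype α] [DecidableEq α] (k : ℕ) :
    ∑ σ : Perm α, Nat.choose (Finset.univ.filter fun x => σ x = x).card k
      = Nat.choose (Fintype.card α) k * Nat.factorial (Fintype.card α - k) := by
  have h1 : ∀ σ : Perm α, Nat.choose (Finset.univ.filter fun x => σ x = x).card k
      = ∑ K ∈ Finset.powersetCard k (univ : Finset α), if ∀ x ∈ K, σ x = x then 1 else 0 := by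
    intro σ
    rw [← Finset.card_powersetCard, ← Finset.card_filter]
    congr 1
    ext K
    simp only [Finset.mem_powersetCard, Finset.mem_filter, Finset.subset_iff, Finset.mem_filter,
      Finset.mem_univ, true_and, subset_univ, Finset.mem_powersetCard_univ]
    tauto
  simp_rw [h1]
  rw [Finset.sum_comm]
  have h2 : ∀ K ∈ Finset.powersetCard k (univ : Finset α),
      (∑ σ : Perm α, if ∀ x ∈ K, σ x = x then 1 else 0) = Nat.factorial (Fintype.card α - k) := by
    intro K hK
    rw [show (∑ σ : Perm α, if ∀ x ∈ K, σ x = x then 1 else 0) = _ from (Finset.card_filter _ _).symm, card_fixing, (Finset.mem_powersetCard.mp hK).2]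
  rw [Finset.sum_congr rfl h2, Finset.sum_const, smul_eq_mul, Finset.card_powersetCard,
    Finset.card_univ]

def wt (m k : ℕ) : ℕ := Nat.choose m k * Nat.factorial k * Nat.factorial (m - k)

lemma wt_eq_of_le {m k : ℕ} (h : k ≤ m) : wt m k = Nat.factorial m := by
  unfold wt
  exact Nat.choose_mul_factorial_mul_factorial h

lemma wt_eq_zero_of_lt {m k : ℕ} (h : m < k) : wt m k = 0 := by
  unfold wt
  simp [Nat.choose_eq_zero_of_lt h]

lemma sum_pow_fix (α : Type*) [Fintype α] [DecidableEq α] (t : ℕ) :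
    ∑ σ : Perm α, ((Finset.univ.filter fun x => σ x = x).card : ℤ) ^ t
      = ∑ k ∈ range (t+1), (stirling t k : ℤ) * (wt (Fintype.card α) k : ℤ) := by
  simp_rw [pow_eq_sum_stirling t]
  rw [Finset.sum_comm]
  refine Finset.sum_congr rfl fun k _ => ?_
  rw [← Finset.mul_sum]
  congr 1
  have h : ∀ σ : Perm α, ((Finset.univ.filter fun x => σ x = x).card.descFactorial k : ℤ)
      = (Nat.factorial k : ℤ) * (Nat.choose (Finset.univ.filter fun x => σ x = x).card k : ℤ) := by
    intro σ; exact_mod_cast congrArg (Nat.cast : ℕ → ℤ) (Nat.descFactorial_eq_factorial_mul_choose _ k)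
  simp_rw [h, ← Finset.mul_sum, ← Nat.cast_sum]
  rw [sum_choose_fix]
  unfold wt
  push_cast
  ring

lemma twoCycleCount_eq_pairs {n : ℕ} (σ : Equiv.Perm (Fin n)) :
    twoCycleCount σ =
      (Finset.univ.filter fun p : Fin n × Fin n =>
        p.1 < p.2 ∧ σ p.1 = p.2 ∧ σ p.2 = p.1).card := by
  classical
  have h1 : twoCycleCount σ
      = (σ.cycleFactorsFinset.filter fun c => c.support.card = 2).card := by
    unfold twoCycleCount
    rw [Equiv.Perm.cycleType_def, Multiset.count_map]
    refine congrArg Multiset.card (Multiset.filter_congr ?_)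
    intro x _
    simp [Function.comp, eq_comm]
  rw [h1]
  refine (Finset.card_bij (fun p _ => Equiv.swap p.1 p.2) ?_ ?_ ?_).symm
  · rintro ⟨a, b⟩ hp
    simp only [Finset.mem_filter, Finset.mem_univ, true_and] at hp
    obtain ⟨hab, h1, h2⟩ := hp
    have hne : a ≠ b := ne_of_lt hab
    simp only [Finset.mem_filter]
    refine ⟨Equiv.Perm.mem_cycleFactorsFinset_iff.mpr ⟨Equiv.Perm.isCycle_swap hne, ?_⟩,
      Equiv.Perm.card_support_swap hne⟩
    intro x hx
    rw [Equiv.Perm.support_swap hne] at hx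
    simp only [Finset.mem_insert, Finset.mem_singleton] at hx
    rcases hx with rfl | rfl
    · simp [Equiv.swap_apply_left, h1]
    · simp [Equiv.swap_apply_right, h2]
  · rintro ⟨a, b⟩ hpm ⟨c, d⟩ hqm heq
    simp only [Finset.mem_filter, Finset.mem_univ, true_and] at hpm hqm
    have heq' : Equiv.swap a b = Equiv.swap c d := heq
    have hab : a < b := hpm.1
    have hcd : c < d := hqm.1
    have hsup := congrArg Equiv.Perm.support heq'
    rw [Equiv.Perm.support_swap (ne_of_lt hab), Equiv.Perm.support_swap (ne_of_lt hcd)] at hsup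
    have ha : a = c ∨ a = d := by
      have : a ∈ ({c, d} : Finset (Fin n)) := by rw [← hsup]; simp
      simpa using this
    have hb : b = c ∨ b = d := by
      have : b ∈ ({c, d} : Finset (Fin n)) := by rw [← hsup]; simp
      simpa using this
    have ha' : a.val = c.val ∨ a.val = d.val := by rcases ha with h | h <;> simp [h]
    have hb' : b.val = c.val ∨ b.val = d.val := by rcases hb with h | h <;> simp [h]
    have hab' : a.val < b.val := hab
    have hcd' : c.val < d.val := hcd
    simp only [Prod.mk.injEq, Fin.ext_iff]
    omega
  · intro c hc
    simp only [Finset.mem_filter] at hc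
    obtain ⟨hmem, hcard⟩ := hc
    obtain ⟨x, y, hxy, rfl⟩ := Equiv.Perm.card_support_eq_two.mp hcard
    have hagree := (Equiv.Perm.mem_cycleFactorsFinset_iff.mp hmem).2
    have hx : Equiv.swap x y x = σ x := by
      apply hagree; rw [Equiv.Perm.support_swap hxy]; simp
    have hy : Equiv.swap x y y = σ y := by
      apply hagree; rw [Equiv.Perm.support_swap hxy]; simp
    rw [Equiv.swap_apply_left] at hx
    rw [Equiv.swap_apply_right] at hy
    rcases lt_or_gt_of_ne hxy with h | h
    · exact ⟨(x, y), by simp [h, hx.symm, hy.symm], rfl⟩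
    · exact ⟨(y, x), by simp [h, hx.symm, hy.symm], by rw [Equiv.swap_comm]⟩


lemma sum_fix_pow_swap_pair {n t : ℕ} {a b : Fin n} (hab : a ≠ b) :
    ∑ σ ∈ Finset.univ.filter (fun σ : Perm (Fin n) => σ a = b ∧ σ b = a),
      ((Finset.univ.filter fun x => σ x = x).card : ℤ) ^ t
      = ∑ τ : Perm {x : Fin n // x ∉ ({a, b} : Finset (Fin n))},
          ((Finset.univ.filter fun x => τ x = x).card : ℤ) ^ t := by
  classical
  set p : Fin n → Prop := fun x => x ∉ ({a, b} : Finset (Fin n)) with hp_def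
  have hswap_fix : ∀ x : Fin n, p x → Equiv.swap a b x = x := by
    intro x hx
    simp only [hp_def, Finset.mem_insert, Finset.mem_singleton, not_or] at hx
    exact Equiv.swap_apply_of_ne_of_ne hx.1 hx.2
  have hp : ∀ (σ : Perm (Fin n)), σ a = b → σ b = a →
      ∀ x, p x ↔ p ((σ * Equiv.swap a b) x) := by
    intro σ h1 h2 x
    by_cases hx : p x
    · have hsx : (σ * Equiv.swap a b) x = σ x := by
        simp [Equiv.Perm.mul_apply, hswap_fix x hx]
      rw [hsx]
      simp only [hp_def, Finset.mem_insert, Finset.mem_singleton, not_or] at hx ⊢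
      constructor
      · intro _
        constructor
        · intro h; exact hx.2 (by rw [← h2] at h; exact σ.injective h)
        · intro h; exact hx.1 (by rw [← h1] at h; exact σ.injective h)
      · intro _; exact hx
    · refine iff_of_false hx ?_
      have hxab : x = a ∨ x = b := by
        by_contra hcon
        push_neg at hcon
        exact hx (by simp [hp_def, hcon.1, hcon.2])
      rcases hxab with rfl | rfl
      · have : (σ * Equiv.swap x b) x = x := by
          simp [Equiv.Perm.mul_apply, Equiv.swap_apply_left, h2]
        rw [this]; exact hx
      · have : (σ * Equiv.swap a x) x = x := by
          simp [Equiv.Perm.mul_apply, Equiv.swap_apply_right, h1]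
        rw [this]; exact hx
  refine Finset.sum_bij
    (fun σ hσ => Equiv.Perm.subtypePerm (σ * Equiv.swap a b)
      (fun x => (hp σ (Finset.mem_filter.mp hσ).2.1 (Finset.mem_filter.mp hσ).2.2 x).symm)) ?_ ?_ ?_ ?_
  · intro σ hσ; exact Finset.mem_univ _
  · intro σ hσ σ' hσ' heq
    have h1 := (Finset.mem_filter.mp hσ).2
    have h1' := (Finset.mem_filter.mp hσ').2
    have hfixn : ∀ x, ¬ p x → (σ * Equiv.swap a b) x = x := by
      intro x hx
      have hxab : x = a ∨ x = b := by
        by_contra hcon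
        push_neg at hcon
        exact hx (by simp [hp_def, hcon.1, hcon.2])
      rcases hxab with rfl | rfl
      · simp [Equiv.Perm.mul_apply, Equiv.swap_apply_left, h1.2]
      · simp [Equiv.Perm.mul_apply, Equiv.swap_apply_right, h1.1]
    have hfixn' : ∀ x, ¬ p x → (σ' * Equiv.swap a b) x = x := by
      intro x hx
      have hxab : x = a ∨ x = b := by
        by_contra hcon
        push_neg at hcon
        exact hx (by simp [hp_def, hcon.1, hcon.2])
      rcases hxab with rfl | rfl
      · simp [Equiv.Perm.mul_apply, Equiv.swap_apply_left, h1'.2]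
      · simp [Equiv.Perm.mul_apply, Equiv.swap_apply_right, h1'.1]
    have hfix : ∀ x, (σ * Equiv.swap a b) x ≠ x → p x :=
      fun x h => by by_contra hpx; exact h (hfixn x (by simp only [hp_def, not_not]; simpa using hpx))
    have hfix' : ∀ x, (σ' * Equiv.swap a b) x ≠ x → p x :=
      fun x h => by by_contra hpx; exact h (hfixn' x (by simp only [hp_def, not_not]; simpa using hpx))
    have := congrArg (Equiv.Perm.ofSubtype (p := p)) heq
    rw [Equiv.Perm.ofSubtype_subtypePerm _ hfix, Equiv.Perm.ofSubtype_subtypePerm _ hfix'] at this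
    exact mul_right_cancel this
  · intro τ _
    refine ⟨Equiv.Perm.ofSubtype τ * Equiv.swap a b, ?_, ?_⟩
    · have hfa : Equiv.Perm.ofSubtype τ b = b :=
        Equiv.Perm.ofSubtype_apply_of_not_mem τ (by simp [hp_def])
      have hfb : Equiv.Perm.ofSubtype τ a = a :=
        Equiv.Perm.ofSubtype_apply_of_not_mem τ (by simp [hp_def])
      refine Finset.mem_filter.mpr ⟨Finset.mem_univ _, ?_, ?_⟩
      · simp [Equiv.Perm.mul_apply, Equiv.swap_apply_left, hfa]
      · simp [Equiv.Perm.mul_apply, Equiv.swap_apply_right, hfb]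
    · have hgg : Equiv.Perm.ofSubtype τ * Equiv.swap a b * Equiv.swap a b
          = Equiv.Perm.ofSubtype τ := by
        rw [mul_assoc, Equiv.swap_mul_self, mul_one]
      simp only [hgg]
      exact Equiv.Perm.subtypePerm_ofSubtype τ
  · intro σ hσ
    have h1 := (Finset.mem_filter.mp hσ).2
    congr 1
    push_cast
    congr 1
    refine (Finset.card_bij (fun (x : {x : Fin n // p x}) _ => x.val) ?_ ?_ ?_).symm
    · intro x hx
      simp only [Finset.mem_filter, Finset.mem_univ, true_and] at hx ⊢
      have : (σ * Equiv.swap a b) x.val = x.val := congrArg Subtype.val hx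
      rwa [Equiv.Perm.mul_apply, hswap_fix x.val x.prop] at this
    · intro x _ y _ h; exact Subtype.ext h
    · intro x hx
      simp only [Finset.mem_filter, Finset.mem_univ, true_and] at hx
      have hpx : p x := by
        simp only [hp_def, Finset.mem_insert, Finset.mem_singleton, not_or]
        constructor
        · rintro rfl; exact hab (hx.symm.trans h1.1)
        · rintro rfl; exact hab (hx.symm.trans h1.2).symm
      refine ⟨⟨x, hpx⟩, ?_, rfl⟩
      simp only [Finset.mem_filter, Finset.mem_univ, true_and]
      apply Subtype.ext
      simp only [Equiv.Perm.subtypePerm_apply, Equiv.Perm.mul_apply, hswap_fix x hpx, hx]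


lemma card_lt_pairs (n : ℕ) :
    (Finset.univ.filter fun p : Fin n × Fin n => p.1 < p.2).card = n.choose 2 := by
  rw [Finset.card_filter, Fintype.sum_prod_type]
  have h1 : ∀ a : Fin n, (∑ b : Fin n, if a < b then (1:ℕ) else 0) = n - 1 - a := by
    intro a
    rw [← Finset.card_filter]
    have : Finset.univ.filter (fun b : Fin n => a < b) = Finset.Ioi a := by
      ext b; simp
    rw [this, Fin.card_Ioi]
  simp_rw [h1]
  rw [Fin.sum_univ_eq_sum_range (fun a => n - 1 - a) n,
    Finset.sum_range_reflect (fun j => j) n, Finset.sum_range_id, Nat.choose_two_right]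

lemma two_mul_ringChoose (x : ℤ) : 2 * Ring.choose x 2 = x * (x - 1) := by
  have h := Ring.descPochhammer_eq_factorial_smul_choose (R := ℤ) x 2
  have h2 : (descPochhammer ℤ 2).smeval x = x * (x - 1) := by
    simp [descPochhammer_succ_right, descPochhammer_zero, Polynomial.smeval_mul,
      Polynomial.smeval_X, Polynomial.smeval_one, Polynomial.smeval_sub, Polynomial.smeval_natCast]
  rw [h2] at h
  rw [show (Nat.factorial 2) = 2 from rfl, nsmul_eq_mul] at h
  push_cast at h
  linarith


lemma card_compl_pair {n : ℕ} {a b : Fin n} (hab : a ≠ b) :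
    Fintype.card {x : Fin n // x ∉ ({a, b} : Finset (Fin n))} = n - 2 := by
  classical
  rw [Fintype.card_subtype]
  rw [Finset.filter_not, Finset.filter_mem_eq_inter, Finset.univ_inter,
    Finset.card_sdiff_of_subset (Finset.subset_univ _), Finset.card_univ, Fintype.card_fin]
  congr 1
  rw [Finset.card_insert_of_notMem (by simpa using hab), Finset.card_singleton]

lemma sum_fix_pow_mul_c2 (n t : ℕ) :
    ∑ σ : Perm (Fin n),
        ((Finset.univ.filter fun x => σ x = x).card : ℤ) ^ t * (twoCycleCount σ : ℤ)
      = (n.choose 2 : ℤ) * ∑ k ∈ range (t+1), (stirling t k : ℤ) * (wt (n-2) k : ℤ) := by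
  classical
  have hterm : ∀ σ : Perm (Fin n),
      ((Finset.univ.filter fun x => σ x = x).card : ℤ) ^ t * (twoCycleCount σ : ℤ)
      = ∑ p : Fin n × Fin n, (if p.1 < p.2 ∧ σ p.1 = p.2 ∧ σ p.2 = p.1 then
          ((Finset.univ.filter fun x => σ x = x).card : ℤ) ^ t else 0) := by
    intro σ
    have hcard : ((Finset.univ.filter fun p : Fin n × Fin n =>
        p.1 < p.2 ∧ σ p.1 = p.2 ∧ σ p.2 = p.1).card : ℤ)
        = ∑ p : Fin n × Fin n,
            (if p.1 < p.2 ∧ σ p.1 = p.2 ∧ σ p.2 = p.1 then (1:ℤ) else 0) := by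
      rw [Finset.card_filter, Nat.cast_sum]
      exact Finset.sum_congr rfl fun p _ => by split_ifs <;> simp
    rw [twoCycleCount_eq_pairs σ, hcard, Finset.mul_sum]
    refine Finset.sum_congr rfl fun p _ => ?_
    split_ifs <;> simp
  simp_rw [hterm]
  rw [Finset.sum_comm]
  have hp : ∀ p : Fin n × Fin n,
      (∑ σ : Perm (Fin n), if p.1 < p.2 ∧ σ p.1 = p.2 ∧ σ p.2 = p.1 then
          ((Finset.univ.filter fun x => σ x = x).card : ℤ) ^ t else 0)
      = if p.1 < p.2 then ∑ k ∈ range (t+1), (stirling t k : ℤ) * (wt (n-2) k : ℤ) else 0 := by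
    intro p
    by_cases h : p.1 < p.2
    · simp only [h, true_and, if_true]
      have : (∑ σ : Perm (Fin n), if σ p.1 = p.2 ∧ σ p.2 = p.1 then
            ((Finset.univ.filter fun x => σ x = x).card : ℤ) ^ t else 0)
          = ∑ σ ∈ Finset.univ.filter (fun σ : Perm (Fin n) => σ p.1 = p.2 ∧ σ p.2 = p.1),
              ((Finset.univ.filter fun x => σ x = x).card : ℤ) ^ t :=
        (Finset.sum_filter _ _).symm
      rw [this, sum_fix_pow_swap_pair (ne_of_lt h), sum_pow_fix, card_compl_pair (ne_of_lt h)]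
    · simp only [h, false_and, if_false, Finset.sum_const_zero]
  simp_rw [hp]
  rw [← Finset.sum_filter, Finset.sum_const, card_lt_pairs, nsmul_eq_mul]

lemma two_mul_choose_two (k : ℕ) : 2 * k.choose 2 = k * (k - 1) := by
  cases k with
  | zero => rfl
  | succ m =>
    rw [Nat.choose_two_right]
    have hd : 2 ∣ (m + 1) * ((m + 1) - 1) := by
      simp only [Nat.add_sub_cancel]
      simpa [Nat.mul_comm] using (Nat.even_mul_succ_self m).two_dvd
    exact Nat.mul_div_cancel' hd

lemma sum_Icc_choose_stirling (r : ℕ) :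
    ∑ k ∈ range (r+1), k * (k - 1) * stirling r k
      = 2 * ∑ i ∈ Finset.Icc 2 r, i.choose 2 * stirling r i := by
  rw [Finset.mul_sum]
  rw [Finset.sum_subset (show Finset.Icc 2 r ⊆ range (r+1) by
      intro x hx; rw [Finset.mem_range]; exact (Finset.mem_Icc.mp hx).2.trans_lt (by omega))
    (fun x hx hnx => ?_)]
  · exact Finset.sum_congr rfl fun k _ => by rw [← mul_assoc, two_mul_choose_two]
  · have hx2 : x < 2 := by
      rw [Finset.mem_range] at hx
      rw [Finset.mem_Icc] at hnx
      omega
    simp [Nat.choose_eq_zero_of_lt hx2]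

end machinery

theorem multiplicity_S_n_minus_2_1_1_in_tensor_power (n r : ℕ) (hn : 3 ≤ n)
    (hr1 : 2 ≤ r) (hrn : r ≤ n - 1) :
    ∑ σ : Equiv.Perm (Fin n),
        (fixCount σ : ℤ) ^ r *
          (Ring.choose ((fixCount σ : ℤ) - 1) 2 - (twoCycleCount σ : ℤ)) =
      (Nat.factorial n : ℤ) *
        ∑ i ∈ Finset.Icc 2 r, (Nat.choose i 2 : ℤ) * (stirling r i : ℤ) := by
  classical
  refine mul_left_cancel₀ (two_ne_zero : (2:ℤ) ≠ 0) ?_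
  have e2 : ∑ σ : Equiv.Perm (Fin n), (fixCount σ : ℤ) ^ (r+2)
      = ∑ k ∈ range (r+3), (stirling (r+2) k : ℤ) * (wt n k : ℤ) := by
    simpa [fixCount, Fintype.card_fin] using sum_pow_fix (Fin n) (r+2)
  have e1 : ∑ σ : Equiv.Perm (Fin n), (fixCount σ : ℤ) ^ (r+1)
      = ∑ k ∈ range (r+2), (stirling (r+1) k : ℤ) * (wt n k : ℤ) := by
    simpa [fixCount, Fintype.card_fin] using sum_pow_fix (Fin n) (r+1)
  have e0 : ∑ σ : Equiv.Perm (Fin n), (fixCount σ : ℤ) ^ r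
      = ∑ k ∈ range (r+1), (stirling r k : ℤ) * (wt n k : ℤ) := by
    simpa [fixCount, Fintype.card_fin] using sum_pow_fix (Fin n) r
  have ec : ∑ σ : Equiv.Perm (Fin n), (fixCount σ : ℤ) ^ r * (twoCycleCount σ : ℤ)
      = (n.choose 2 : ℤ) * ∑ k ∈ range (r+1), (stirling r k : ℤ) * (wt (n-2) k : ℤ) := by
    simpa [fixCount] using sum_fix_pow_mul_c2 n r
  have step : 2 * (∑ σ : Equiv.Perm (Fin n),
        (fixCount σ : ℤ) ^ r *
          (Ring.choose ((fixCount σ : ℤ) - 1) 2 - (twoCycleCount σ : ℤ)))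
      = ((∑ k ∈ range (r+3), (stirling (r+2) k : ℤ) * (wt n k : ℤ))
          - 3 * ∑ k ∈ range (r+2), (stirling (r+1) k : ℤ) * (wt n k : ℤ)
          + 2 * ∑ k ∈ range (r+1), (stirling r k : ℤ) * (wt n k : ℤ))
        - 2 * ((n.choose 2 : ℤ) * ∑ k ∈ range (r+1), (stirling r k : ℤ) * (wt (n-2) k : ℤ)) := by
    rw [Finset.mul_sum]
    have hσ : ∀ σ : Equiv.Perm (Fin n),
        2 * ((fixCount σ : ℤ) ^ r *
          (Ring.choose ((fixCount σ : ℤ) - 1) 2 - (twoCycleCount σ : ℤ)))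
        = ((fixCount σ : ℤ) ^ (r+2) - 3 * (fixCount σ : ℤ) ^ (r+1) + 2 * (fixCount σ : ℤ) ^ r)
          - 2 * ((fixCount σ : ℤ) ^ r * (twoCycleCount σ : ℤ)) := by
      intro σ
      have h := two_mul_ringChoose ((fixCount σ : ℤ) - 1)
      calc 2 * ((fixCount σ : ℤ) ^ r *
            (Ring.choose ((fixCount σ : ℤ) - 1) 2 - (twoCycleCount σ : ℤ)))
          = (fixCount σ : ℤ) ^ r * (2 * Ring.choose ((fixCount σ : ℤ) - 1) 2)
            - 2 * ((fixCount σ : ℤ) ^ r * (twoCycleCount σ : ℤ)) := by ring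
        _ = (fixCount σ : ℤ) ^ r * (((fixCount σ : ℤ) - 1) * (((fixCount σ : ℤ) - 1) - 1))
            - 2 * ((fixCount σ : ℤ) ^ r * (twoCycleCount σ : ℤ)) := by rw [h]
        _ = _ := by ring
    rw [Finset.sum_congr rfl (fun σ _ => hσ σ), Finset.sum_sub_distrib, Finset.sum_add_distrib,
      Finset.sum_sub_distrib, ← Finset.mul_sum, ← Finset.mul_sum, ← Finset.mul_sum,
      e2, e1, e0, ec]
  rw [step]
  -- now pure arithmetic
  have hwt : ∀ k ≤ n, (wt n k : ℤ) = (n.factorial : ℤ) := fun k hk => by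
    rw [wt_eq_of_le hk]
  have hA1 : ∑ k ∈ range (r+2), (stirling (r+1) k : ℤ) * (wt n k : ℤ)
      = (n.factorial : ℤ) * (bsum (r+1) : ℤ) := by
    rw [show ((bsum (r+1) : ℕ) : ℤ) = ∑ k ∈ range (r+2), (stirling (r+1) k : ℤ) by
      unfold bsum; push_cast; ring, Finset.mul_sum]
    exact Finset.sum_congr rfl fun k hk => by
      rw [hwt k (by rw [Finset.mem_range] at hk; omega)]; ring
  have hA0 : ∑ k ∈ range (r+1), (stirling r k : ℤ) * (wt n k : ℤ)
      = (n.factorial : ℤ) * (bsum r : ℤ) := by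
    rw [show ((bsum r : ℕ) : ℤ) = ∑ k ∈ range (r+1), (stirling r k : ℤ) by
      unfold bsum; push_cast; ring, Finset.mul_sum]
    exact Finset.sum_congr rfl fun k hk => by
      rw [hwt k (by rw [Finset.mem_range] at hk; omega)]; ring
  have hST := STId r
  have hT := sum_Icc_choose_stirling r
  have hDcast : ((∑ k ∈ range (r+1), k * (k - 1) * stirling r k : ℕ) : ℤ)
      = 2 * ∑ i ∈ Finset.Icc 2 r, (i.choose 2 : ℤ) * (stirling r i : ℤ) := by
    rw [hT]; push_cast; ring
  have hSTcast : ((bsum (r+2) : ℕ) : ℤ) + (bsum r : ℤ)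
      = 3 * (bsum (r+1) : ℤ) + 2 * ∑ i ∈ Finset.Icc 2 r, (i.choose 2 : ℤ) * (stirling r i : ℤ) := by
    rw [← hDcast]; exact_mod_cast congrArg (Nat.cast : ℕ → ℤ) hST
  have hfact : (n.choose 2 : ℤ) * 2 * ((n-2).factorial : ℤ) = (n.factorial : ℤ) := by
    have h1 : 2 * n.choose 2 = n * (n - 1) := two_mul_choose_two n
    have h2 : n * ((n - 1) * (n - 2).factorial) = n.factorial := by
      have h3 : (n - 1) * (n - 2).factorial = (n - 1).factorial := by
        rw [show n - 2 = (n - 1) - 1 by omega]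
        exact Nat.mul_factorial_pred (by omega)
      rw [h3]
      exact Nat.mul_factorial_pred (by omega)
    have : n.choose 2 * 2 * (n - 2).factorial = n.factorial := by
      rw [mul_comm (n.choose 2) 2, h1, mul_assoc, h2]
    exact_mod_cast congrArg (Nat.cast : ℕ → ℤ) this
  by_cases hcase : r + 2 ≤ n
  · have hA2 : ∑ k ∈ range (r+3), (stirling (r+2) k : ℤ) * (wt n k : ℤ)
        = (n.factorial : ℤ) * (bsum (r+2) : ℤ) := by
      rw [show ((bsum (r+2) : ℕ) : ℤ) = ∑ k ∈ range (r+3), (stirling (r+2) k : ℤ) by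
        unfold bsum; push_cast; ring, Finset.mul_sum]
      exact Finset.sum_congr rfl fun k hk => by
        rw [hwt k (by rw [Finset.mem_range] at hk; omega)]; ring
    have hC0 : ∑ k ∈ range (r+1), (stirling r k : ℤ) * (wt (n-2) k : ℤ)
        = ((n-2).factorial : ℤ) * (bsum r : ℤ) := by
      rw [show ((bsum r : ℕ) : ℤ) = ∑ k ∈ range (r+1), (stirling r k : ℤ) by
        unfold bsum; push_cast; ring, Finset.mul_sum]
      refine Finset.sum_congr rfl fun k hk => ?_
      rw [show (wt (n-2) k : ℤ) = ((n-2).factorial : ℤ) by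
        rw [wt_eq_of_le (by rw [Finset.mem_range] at hk; omega)]]
      ring
    rw [hA2, hA1, hA0, hC0]
    linear_combination (n.factorial : ℤ) * hSTcast - ((bsum r : ℕ) : ℤ) * hfact
  · -- r = n - 1
    have hr : r = n - 1 := by omega
    have hA2 : ∑ k ∈ range (r+3), (stirling (r+2) k : ℤ) * (wt n k : ℤ)
        = (n.factorial : ℤ) * (bsum (r+2) : ℤ) - (n.factorial : ℤ) := by
      rw [Finset.sum_range_succ]
      rw [show (wt n (r+2) : ℤ) = 0 by
        rw [wt_eq_zero_of_lt (by omega)]; simp]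
      rw [mul_zero, add_zero]
      have hb : ((bsum (r+2) : ℕ) : ℤ) = (∑ k ∈ range (r+2), (stirling (r+2) k : ℤ)) + 1 := by
        unfold bsum
        rw [Finset.sum_range_succ, stirling_self]
        push_cast; ring
      rw [hb, mul_add, mul_one, add_sub_cancel_right, Finset.mul_sum]
      exact Finset.sum_congr rfl fun k hk => by
        rw [hwt k (by rw [Finset.mem_range] at hk; omega)]; ring
    have hC0 : ∑ k ∈ range (r+1), (stirling r k : ℤ) * (wt (n-2) k : ℤ)
        = ((n-2).factorial : ℤ) * (bsum r : ℤ) - ((n-2).factorial : ℤ) := by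
      rw [Finset.sum_range_succ]
      rw [show (wt (n-2) r : ℤ) = 0 by
        rw [wt_eq_zero_of_lt (by omega)]; simp]
      rw [mul_zero, add_zero]
      have hb : ((bsum r : ℕ) : ℤ) = (∑ k ∈ range r, (stirling r k : ℤ)) + 1 := by
        unfold bsum
        rw [Finset.sum_range_succ, stirling_self]
        push_cast; ring
      rw [hb, mul_add, mul_one, add_sub_cancel_right, Finset.mul_sum]
      refine Finset.sum_congr rfl fun k hk => ?_
      rw [show (wt (n-2) k : ℤ) = ((n-2).factorial : ℤ) by
        rw [wt_eq_of_le (by rw [Finset.mem_range] at hk; omega)]]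
      ring
    rw [hA2, hA1, hA0, hC0]
    linear_combination (n.factorial : ℤ) * hSTcast - (((bsum r : ℕ) : ℤ) - 1) * hfact
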